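/- arXiv:2105.05586 — 2 statements merged into one kernel-verified Lean document; each statement's English description precedes it below -/
import Mathlib

section
/- Let f, g be locally Lipschitz vector fields on ℝⁿ, let u : ℝⁿ → ℝᵐ be a Lipschitz continuous feedback controller, let h : ℝⁿ → ℝ be continuously differentiable, and let γ be an extended class-K∞ function. Suppose that for every z ∈ ℝⁿ the closed-loop CBF condition Dh(z)[f(z) + g(z)u(z)] ≥ −γ(h(z)) holds, where Dh(z) denotes the Fréchet derivative of h at z. If x : [0, T) → ℝⁿ is differentiable and satisfies the closed-loop dynamics x'(t) = f(x(t)) + g(x(t))u(x(t)) for all t ∈ [0, T), and h(x(0)) ≥ 0, then h(x(t)) ≥ 0 for all t ∈ [0, T); that is, the controller renders the zero superlevel set C = {z : h(z) ≥ 0} forward invariant. -/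
/-- Forward-invariance part of CBF Theorem 1: a Lipschitz controller satisfying the
closed-loop CBF condition renders the zero superlevel set of `h` forward invariant. -/
theorem cbf_forward_invariance
    {n m : ℕ}
    (f : (Fin n → ℝ) → (Fin n → ℝ))
    (g : (Fin n → ℝ) → ((Fin m → ℝ) →L[ℝ] (Fin n → ℝ)))
    (u : (Fin n → ℝ) → (Fin m → ℝ))
    (h : (Fin n → ℝ) → ℝ)
    (γ : ℝ → ℝ)
    (hf : LocallyLipschitz f)
    (hg : LocallyLipschitz g)
    (hu : ∃ K : NNReal, LipschitzWith K u)
    (hh : ContDiff ℝ 1 h)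
    (hγ_cont : Continuous γ) (hγ_mono : StrictMono γ) (hγ_zero : γ 0 = 0)
    (hcbf : ∀ z : Fin n → ℝ, fderiv ℝ h z (f z + g z (u z)) ≥ -γ (h z))
    (T : ℝ)
    (x : ℝ → (Fin n → ℝ))
    (hx : ∀ t ∈ Set.Ico (0 : ℝ) T, HasDerivAt x (f (x t) + g (x t) (u (x t))) t)
    (h0 : h (x 0) ≥ 0) :
    ∀ t ∈ Set.Ico (0 : ℝ) T, h (x t) ≥ 0 := by
  set φ : ℝ → ℝ := fun t => h (x t) with hφdef
  -- φ has a derivative at each point of [0, T)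
  have hφderiv : ∀ t ∈ Set.Ico (0 : ℝ) T,
      HasDerivAt φ ((fderiv ℝ h (x t)) (f (x t) + g (x t) (u (x t)))) t := by
    intro t ht
    exact ((hh.differentiable one_ne_zero (x t)).hasFDerivAt).comp_hasDerivAt t (hx t ht)
  -- φ is continuous at each point of [0, T)
  have hφcont : ∀ t ∈ Set.Ico (0 : ℝ) T, ContinuousAt φ t := fun t ht =>
    (hφderiv t ht).continuousAt
  intro t₁ ht₁
  by_contra hneg
  push_neg at hneg
  have ht₁0 : (0:ℝ) ≤ t₁ := ht₁.1
  have ht₁T : t₁ < T := ht₁.2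
  -- the set of times in [0, t₁] where φ ≥ 0
  set S : Set ℝ := {t | t ∈ Set.Icc (0:ℝ) t₁ ∧ 0 ≤ φ t} with hSdef
  have hIccsub : Set.Icc (0:ℝ) t₁ ⊆ Set.Ico 0 T := fun r hr =>
    ⟨hr.1, lt_of_le_of_lt hr.2 ht₁T⟩
  have hScont : ContinuousOn φ (Set.Icc (0:ℝ) t₁) := fun r hr =>
    (hφcont r (hIccsub hr)).continuousWithinAt
  have hSclosed : IsClosed S := by
    have : S = Set.Icc (0:ℝ) t₁ ∩ φ ⁻¹' Set.Ici 0 := by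
      ext r; simp [hSdef, Set.mem_Icc, and_assoc]
    rw [this]
    exact hScont.preimage_isClosed_of_isClosed isClosed_Icc isClosed_Ici
  have hSne : S.Nonempty := ⟨0, ⟨le_rfl, ht₁0⟩, h0⟩
  have hSbdd : BddAbove S := ⟨t₁, fun r hr => hr.1.2⟩
  set s := sSup S with hsdef
  have hsS : s ∈ S := hSclosed.csSup_mem hSne hSbdd
  have hs0 : (0:ℝ) ≤ s := hsS.1.1
  have hst₁ : s ≤ t₁ := hsS.1.2
  have hφs : 0 ≤ φ s := hsS.2
  have hslt : s < t₁ := by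
    rcases lt_or_eq_of_le hst₁ with h' | h'
    · exact h'
    · exact absurd (h' ▸ hφs) (not_le.mpr hneg)
  -- on (s, t₁], φ < 0
  have hφneg : ∀ r, s < r → r ≤ t₁ → φ r < 0 := by
    intro r hr1 hr2
    by_contra hc
    push_neg at hc
    have : r ∈ S := ⟨⟨le_trans hs0 hr1.le, hr2⟩, hc⟩
    exact absurd (le_csSup hSbdd this) (not_le.mpr hr1)
  -- φ is monotone on [s, t₁] since its derivative there is ≥ -γ(φ) ≥ 0
  have hmono : MonotoneOn φ (Set.Icc s t₁) := by
    have hsub : Set.Icc s t₁ ⊆ Set.Icc 0 t₁ := Set.Icc_subset_Icc hs0 le_rfl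
    apply monotoneOn_of_deriv_nonneg (convex_Icc s t₁) (hScont.mono hsub)
    · intro r hr
      rw [interior_Icc] at hr
      exact (hφderiv r (hIccsub (hsub ⟨hr.1.le, hr.2.le⟩))).differentiableAt.differentiableWithinAt
    · intro r hr
      rw [interior_Icc] at hr
      have hd := hφderiv r (hIccsub (hsub ⟨hr.1.le, hr.2.le⟩))
      rw [hd.deriv]
      have hφr : φ r < 0 := hφneg r hr.1 hr.2.le
      have : γ (φ r) < 0 := hγ_zero ▸ hγ_mono hφr
      linarith [hcbf (x r)]
  have := hmono ⟨le_rfl, hst₁⟩ ⟨hslt.le, le_rfl⟩ hslt.le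
  linarith
end

section
/- Let f, g be locally Lipschitz vector fields on ℝⁿ, let u : ℝⁿ → ℝᵐ be a Lipschitz continuous feedback controller, let h : ℝⁿ → ℝ be continuously differentiable, and let γ be an extended class-K∞ function. Suppose that for every z ∈ ℝⁿ the closed-loop CBF condition Dh(z)[f(z) + g(z)u(z)] ≥ −γ(h(z)) holds. If x : [0, ∞) → ℝⁿ is differentiable, satisfies x'(t) = f(x(t)) + g(x(t))u(x(t)) for all t ≥ 0, then liminf_{t → ∞} h(x(t)) ≥ 0; in particular, for every ε > 0 there exists T ≥ 0 such that h(x(t)) ≥ −ε for all t ≥ T. That is, the set C = {z : h(z) ≥ 0} is attractive for the closed-loop system. -/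
/-- Attractivity part of CBF Theorem 1: a Lipschitz controller satisfying the
closed-loop CBF condition renders the set `C = {z : h z ≥ 0}` attractive:
`liminf_{t → ∞} h(x t) ≥ 0`, and in particular for every `ε > 0` there is `T ≥ 0`
such that `h (x t) ≥ -ε` for all `t ≥ T`. -/
theorem cbf_attractivity
    {n m : ℕ}
    (f : (Fin n → ℝ) → (Fin n → ℝ))
    (g : (Fin n → ℝ) → ((Fin m → ℝ) →L[ℝ] (Fin n → ℝ)))
    (u : (Fin n → ℝ) → (Fin m → ℝ))
    (h : (Fin n → ℝ) → ℝ)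
    (γ : ℝ → ℝ)
    (hf : LocallyLipschitz f)
    (hg : LocallyLipschitz g)
    (hu : ∃ K : NNReal, LipschitzWith K u)
    (hh : ContDiff ℝ 1 h)
    (hγ_cont : Continuous γ) (hγ_mono : StrictMono γ) (hγ_zero : γ 0 = 0)
    (hcbf : ∀ z : Fin n → ℝ, fderiv ℝ h z (f z + g z (u z)) ≥ -γ (h z))
    (x : ℝ → (Fin n → ℝ))
    (hx : ∀ t : ℝ, 0 ≤ t → HasDerivAt x (f (x t) + g (x t) (u (x t))) t) :
    (0 ≤ Filter.atTop.liminf (fun t : ℝ => h (x t))) ∧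
      (∀ ε : ℝ, ε > 0 → ∃ T : ℝ, 0 ≤ T ∧ ∀ t : ℝ, T ≤ t → h (x t) ≥ -ε) := by
  classical
  set φ : ℝ → ℝ := fun t => h (x t) with hφdef
  have hhd : Differentiable ℝ h := hh.differentiable one_ne_zero
  have hD : ∀ t : ℝ, 0 ≤ t →
      HasDerivAt φ (fderiv ℝ h (x t) (f (x t) + g (x t) (u (x t)))) t := by
    intro t ht
    exact (hhd (x t)).hasFDerivAt.comp_hasDerivAt t (hx t ht)
  -- forward invariance of {φ ≥ -ε}
  have key2 : ∀ ε : ℝ, 0 < ε → ∀ T : ℝ, 0 ≤ T → -ε ≤ φ T →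
      ∀ t : ℝ, T ≤ t → -ε ≤ φ t := by
    intro ε hε T hT hφT t ht
    by_contra hlt
    push_neg at hlt
    have hTt : T < t := lt_of_le_of_ne ht (by rintro rfl; exact absurd hφT (not_le.2 hlt))
    set S : Set ℝ := Set.Icc T t ∩ φ ⁻¹' Set.Ici (-ε) with hS
    have hcont : ContinuousOn φ (Set.Icc T t) := fun s hs =>
      ((hD s (le_trans hT hs.1)).continuousAt).continuousWithinAt
    have hSclosed : IsClosed S :=
      hcont.preimage_isClosed_of_isClosed isClosed_Icc isClosed_Ici
    have hSne : S.Nonempty := ⟨T, ⟨le_rfl, le_of_lt hTt⟩, hφT⟩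
    have hSbdd : BddAbove S := ⟨t, fun s hs => hs.1.2⟩
    set s := sSup S with hsdef
    have hsS : s ∈ S := hSclosed.csSup_mem hSne hSbdd
    have hsle : s ≤ t := hsS.1.2
    have hsne : s ≠ t := by
      intro he
      have h' : -ε ≤ φ t := by rw [← he]; exact hsS.2
      linarith
    have hslt : s < t := lt_of_le_of_ne hsle hsne
    have hafter : ∀ r : ℝ, s < r → r ≤ t → φ r < -ε := by
      intro r hr hrt
      by_contra hge
      push_neg at hge
      have hrS : r ∈ S := ⟨⟨le_trans hsS.1.1 hr.le, hrt⟩, hge⟩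
      exact absurd (le_csSup hSbdd hrS) (not_le.2 hr)
    have hmono : StrictMonoOn φ (Set.Icc s t) := by
      apply strictMonoOn_of_deriv_pos (convex_Icc s t)
      · exact hcont.mono (Set.Icc_subset_Icc hsS.1.1 le_rfl)
      · intro r hr
        rw [interior_Icc] at hr
        have hr0 : (0:ℝ) ≤ r := le_trans (le_trans hT hsS.1.1) hr.1.le
        rw [(hD r hr0).deriv]
        have hφr : φ r < -ε := hafter r hr.1 hr.2.le
        have hγneg : γ (φ r) < 0 := by
          have h0 : φ r < 0 := by linarith
          have := hγ_mono h0
          rwa [hγ_zero] at this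
        have := hcbf (x r)
        simp only [ge_iff_le] at this
        linarith
    have := hmono (Set.mem_Icc.2 ⟨le_rfl, hsle⟩) (Set.mem_Icc.2 ⟨hsle, le_rfl⟩) hslt
    have hsge : -ε ≤ φ s := hsS.2
    linarith
  -- existence of a time where φ ≥ -ε
  have key1 : ∀ ε : ℝ, 0 < ε → ∃ T : ℝ, 0 ≤ T ∧ -ε ≤ φ T := by
    intro ε hε
    by_contra hcon
    push_neg at hcon
    have hall : ∀ t : ℝ, 0 ≤ t → φ t < -ε := fun t ht => hcon t ht
    set δ : ℝ := -γ (-ε) with hδ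
    have hδpos : 0 < δ := by
      have := hγ_mono (show -ε < 0 by linarith)
      rw [hγ_zero] at this
      simp only [hδ]; linarith
    set ψ : ℝ → ℝ := fun t => φ t - δ * t with hψ
    have hψd : ∀ r : ℝ, 0 ≤ r →
        HasDerivAt ψ (fderiv ℝ h (x r) (f (x r) + g (x r) (u (x r))) - δ) r := by
      intro r hr
      simpa using (hD r hr).fun_sub ((hasDerivAt_id r).const_mul δ)
    have hψmono : MonotoneOn ψ (Set.Ici 0) := by
      apply monotoneOn_of_deriv_nonneg (convex_Ici 0)
      · intro r hr
        exact ((hψd r hr).continuousAt).continuousWithinAt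
      · intro r hr
        rw [interior_Ici] at hr
        exact ((hψd r hr.le).differentiableAt).differentiableWithinAt
      · intro r hr
        rw [interior_Ici] at hr
        rw [(hψd r hr.le).deriv]
        have h1 : γ (φ r) < γ (-ε) := hγ_mono (hall r hr.le)
        have h2 := hcbf (x r)
        simp only [ge_iff_le] at h2
        simp only [hδ]
        linarith
    set t0 : ℝ := max 0 ((-ε - φ 0) / δ + 1) with ht0
    have ht00 : (0:ℝ) ≤ t0 := le_max_left _ _
    have hψle := hψmono Set.self_mem_Ici (Set.mem_Ici.2 ht00) ht00
    have ht0big : (-ε - φ 0) / δ + 1 ≤ t0 := le_max_right _ _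
    have hφ0 : φ 0 + δ * t0 ≤ φ t0 := by
      simp only [hψ, mul_zero, sub_zero] at hψle
      linarith
    have hmul : -ε - φ 0 + δ ≤ δ * t0 := by
      have h1 : δ * ((-ε - φ 0)/δ + 1) ≤ δ * t0 := mul_le_mul_of_nonneg_left ht0big hδpos.le
      have h2 : δ * ((-ε - φ 0)/δ) = -ε - φ 0 := mul_div_cancel₀ _ hδpos.ne'
      nlinarith
    have := hall t0 ht00
    linarith
  constructor
  · -- liminf
    by_cases hbdd : BddAbove {a : ℝ | ∀ᶠ t in Filter.atTop, a ≤ φ t}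
    · have hcob : Filter.IsCoboundedUnder (· ≥ ·) Filter.atTop φ := by
        obtain ⟨b, hb⟩ := hbdd
        exact ⟨b, fun a ha => hb (Filter.eventually_map.1 ha)⟩
      by_contra hL
      push_neg at hL
      set L := Filter.atTop.liminf (fun t : ℝ => h (x t)) with hLdef
      have hε : 0 < -L/2 := by linarith
      obtain ⟨T, hT0, hT⟩ := key1 (-L/2) hε
      have h2 := key2 (-L/2) hε T hT0 hT
      have hlim : -(-L/2) ≤ L :=
        Filter.le_liminf_of_le hcob (Filter.eventually_atTop.2 ⟨T, fun t ht => h2 t ht⟩)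
      linarith
    · have : Filter.atTop.liminf (fun t : ℝ => h (x t)) = 0 := by
        rw [Filter.liminf_eq]
        exact Real.sSup_of_not_bddAbove hbdd
      rw [this]
  · intro ε hε
    obtain ⟨T, hT0, hT⟩ := key1 ε hε
    exact ⟨T, hT0, fun t ht => key2 ε hε T hT0 hT t ht⟩
end
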